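/- For every n ≥ 0, ρ-almost everywhere on the event {D_n > 0} one has E_ρ[D_{n+1} | G_n] ≤ D_n; that is, the vertex-distance process (D_n) satisfies the supermartingale inequality at every time when the two paths are at distinct vertices. -/

import Mathlib

open MeasureTheory Filter
open scoped ENNReal

/-- The Euler path space: a point is an infinite edge path in the Euler graph,
`x n : Fin (n+2)` being the label of the edge chosen from level `n` to level `n+1`. -/
abbrev EulerPath : Type := ∀ n : ℕ, Fin (n + 2)

/-- Vertex labels: `kv x n` is the `k` with the path `x` passing through vertex `(n,k)`.
A label `(x n : ℕ) ≤ kv x n` is a left turn (edge to `(n+1, kv x n)`), a larger label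
is a right turn (edge to `(n+1, kv x n + 1)`). -/
def kv (x : EulerPath) : ℕ → ℕ
  | 0 => 0
  | n + 1 => if (x n : ℕ) ≤ kv x n then kv x n else kv x n + 1

/-- The symmetric measure: the product over `n` of the uniform probability measures on
`Fin (n+2)`, characterized as the probability measure giving each cylinder of length `n`
the measure `∏_{i<n} 1/(i+2)`. -/
def IsSymmetricMeasure (η : Measure EulerPath) : Prop :=
  IsProbabilityMeasure η ∧
    ∀ (n : ℕ) (c : EulerPath),
      η {x | ∀ i < n, x i = c i} = ∏ i ∈ Finset.range n, ((i : ℝ≥0∞) + 2)⁻¹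

/- Below, `η.prod η` plays the role of the product measure `ρ = η × η` on `X × X`. -/

/-- The vertex distance `D_n(x,x') = |k_n(x) - k_n(x')|` (an integer, viewed in `ℝ`). -/
def D (n : ℕ) (p : EulerPath × EulerPath) : ℝ :=
  ((|(kv p.1 n : ℤ) - (kv p.2 n : ℤ)| : ℤ) : ℝ)

/-- `G_n`: the σ-algebra on `X × X` generated by the coordinate pairs
`(x_0,x'_0), …, (x_{n-1},x'_{n-1})`. -/
def pairAlg (n : ℕ) : MeasurableSpace (EulerPath × EulerPath) :=
  ⨆ i : Fin n, MeasurableSpace.comap (fun p => (p.1 i, p.2 i)) inferInstance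

/-- The filtration `(G_n)` on `X × X`. -/
def pairFil : Filtration ℕ (inferInstance : MeasurableSpace (EulerPath × EulerPath)) where
  seq := pairAlg
  mono' := by
    intro i j hij
    exact iSup_le fun v => le_iSup_of_le (⟨v.1, lt_of_lt_of_le v.2 hij⟩ : Fin j) le_rfl
  le' := by
    intro i
    refine iSup_le fun v => Measurable.comap_le ?_
    exact ((measurable_pi_apply _).comp measurable_fst).prodMk
      ((measurable_pi_apply _).comp measurable_snd)

/-- step function -/
def stepf (k a : ℕ) : ℕ := if a ≤ k then k else k + 1

lemma kv_succ (x : EulerPath) (N : ℕ) : kv x (N + 1) = stepf (kv x N) (x N) := rfl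

lemma kv_congr : ∀ (N : ℕ) {x y : EulerPath}, (∀ i < N, x i = y i) → kv x N = kv y N
  | 0, _, _, _ => rfl
  | N + 1, x, y, h => by
    have ih := kv_congr N (fun i hi => h i (Nat.lt_succ_of_lt hi))
    have hN := h N (Nat.lt_succ_self N)
    simp [kv, ih, hN]

lemma kv_le (x : EulerPath) : ∀ N, kv x N ≤ N
  | 0 => le_refl 0
  | N + 1 => by
    have := kv_le x N
    rw [kv_succ, stepf]; split <;> omega

noncomputable def Fval (n k k' : ℕ) : ℝ :=
  (((n : ℝ) + 2) ^ 2)⁻¹ * ∑ a : Fin (n + 2), ∑ b : Fin (n + 2),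
    ((|(stepf k a : ℤ) - (stepf k' b : ℤ)| : ℤ) : ℝ)

lemma Fval_comm (n k k' : ℕ) : Fval n k k' = Fval n k' k := by
  unfold Fval
  rw [Finset.sum_comm]
  congr 1
  refine Finset.sum_congr rfl fun b _ => Finset.sum_congr rfl fun a _ => ?_
  rw [abs_sub_comm]

lemma Fval_nonneg (n k k' : ℕ) : 0 ≤ Fval n k k' := by
  apply mul_nonneg
  · positivity
  · refine Finset.sum_nonneg fun a _ => Finset.sum_nonneg fun b _ => ?_
    exact_mod_cast abs_nonneg _

lemma Fval_le_bound (n k k' : ℕ) : Fval n k k' ≤ (k : ℝ) + k' + 2 := by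
  unfold Fval
  have hb : ∀ a b : Fin (n + 2),
      ((|(stepf k a : ℤ) - (stepf k' b : ℤ)| : ℤ) : ℝ) ≤ (k : ℝ) + k' + 2 := by
    intro a b
    have h1 : |(stepf k a : ℤ) - (stepf k' b : ℤ)| ≤ (k : ℤ) + k' + 2 := by
      unfold stepf; split <;> split <;> simp [abs_le] <;> omega
    exact_mod_cast h1
  have hsum : ∑ a : Fin (n + 2), ∑ b : Fin (n + 2),
      ((|(stepf k a : ℤ) - (stepf k' b : ℤ)| : ℤ) : ℝ)
      ≤ ((n : ℝ) + 2) ^ 2 * ((k : ℝ) + k' + 2) := by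
    calc _ ≤ ∑ _a : Fin (n + 2), ∑ _b : Fin (n + 2), ((k : ℝ) + k' + 2) :=
          Finset.sum_le_sum fun a _ => Finset.sum_le_sum fun b _ => hb a b
      _ = ((n : ℝ) + 2) ^ 2 * ((k : ℝ) + k' + 2) := by
          simp [Finset.sum_const]; ring
  have hpos : (0 : ℝ) < ((n : ℝ) + 2) ^ 2 := by positivity
  calc (((n : ℝ) + 2) ^ 2)⁻¹ * ∑ a : Fin (n + 2), ∑ b : Fin (n + 2),
      ((|(stepf k a : ℤ) - (stepf k' b : ℤ)| : ℤ) : ℝ)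
      ≤ (((n : ℝ) + 2) ^ 2)⁻¹ * (((n : ℝ) + 2) ^ 2 * ((k : ℝ) + k' + 2)) := by
        apply mul_le_mul_of_nonneg_left hsum (by positivity)
    _ = (k : ℝ) + k' + 2 := by field_simp

lemma Fval_le_of_lt (n : ℕ) {k k' : ℕ} (h : k < k') :
    Fval n k k' ≤ ((k' : ℝ) - k) := by
  have key : ∑ a : Fin (n + 2), ∑ b : Fin (n + 2),
      ((|(stepf k a : ℤ) - (stepf k' b : ℤ)| : ℤ) : ℝ)
      ≤ ((n : ℝ) + 2) ^ 2 * ((k' : ℝ) - k) := by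
    have hpt : ∀ a b : Fin (n + 2),
        (|(stepf k a : ℤ) - (stepf k' b : ℤ)| : ℤ)
        = ((k' : ℤ) - k) + ((if (b : ℕ) ≤ k' then (0:ℤ) else 1) - (if (a : ℕ) ≤ k then (0:ℤ) else 1)) := by
      intro a b
      unfold stepf; split <;> split <;>
        · rw [abs_of_nonpos (by push_cast; omega)]; push_cast; ring
    have hmono : ∑ b : Fin (n + 2), (if (b : ℕ) ≤ k' then (0:ℤ) else 1)
        ≤ ∑ a : Fin (n + 2), (if (a : ℕ) ≤ k then (0:ℤ) else 1) := by
      refine Finset.sum_le_sum fun i _ => ?_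
      split <;> split <;> omega
    have expand : ∀ (c : ℤ) (f g : Fin (n + 2) → ℤ),
        ∑ a : Fin (n + 2), ∑ b : Fin (n + 2), (c + (g b - f a))
        = ((n : ℤ) + 2) ^ 2 * c + (((n : ℤ) + 2) * ∑ b : Fin (n + 2), g b
            - ((n : ℤ) + 2) * ∑ a : Fin (n + 2), f a) := by
      intro c f g
      have inner : ∀ a : Fin (n + 2), ∑ b : Fin (n + 2), (c + (g b - f a))
          = ((n : ℤ) + 2) * c + (∑ b : Fin (n + 2), g b - ((n : ℤ) + 2) * f a) := by
        intro a
        rw [Finset.sum_add_distrib, Finset.sum_sub_distrib, Finset.sum_const, Finset.sum_const]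
        simp only [Finset.card_univ, Fintype.card_fin, nsmul_eq_mul]
        push_cast; ring
      rw [Finset.sum_congr rfl (fun a _ => inner a)]
      rw [Finset.sum_add_distrib, Finset.sum_sub_distrib, Finset.sum_const, Finset.sum_const,
        ← Finset.mul_sum]
      simp only [Finset.card_univ, Fintype.card_fin, nsmul_eq_mul]
      push_cast; ring
    have hint : ∑ a : Fin (n + 2), ∑ b : Fin (n + 2),
        (|(stepf k a : ℤ) - (stepf k' b : ℤ)| : ℤ)
        ≤ ((n : ℤ) + 2) ^ 2 * ((k' : ℤ) - k) := by
      simp_rw [hpt]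
      rw [expand]
      have h2 : ((n : ℤ) + 2) * ∑ b : Fin (n + 2), (if (b : ℕ) ≤ k' then (0:ℤ) else 1)
          ≤ ((n : ℤ) + 2) * ∑ a : Fin (n + 2), (if (a : ℕ) ≤ k then (0:ℤ) else 1) :=
        mul_le_mul_of_nonneg_left hmono (by positivity)
      linarith
    calc ∑ a : Fin (n + 2), ∑ b : Fin (n + 2),
        ((|(stepf k a : ℤ) - (stepf k' b : ℤ)| : ℤ) : ℝ)
        = ((∑ a : Fin (n + 2), ∑ b : Fin (n + 2),
          (|(stepf k a : ℤ) - (stepf k' b : ℤ)| : ℤ) : ℤ) : ℝ) := by push_cast; rfl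
      _ ≤ ((((n : ℤ) + 2) ^ 2 * ((k' : ℤ) - k) : ℤ) : ℝ) := by exact_mod_cast hint
      _ = ((n : ℝ) + 2) ^ 2 * ((k' : ℝ) - k) := by push_cast; ring
  unfold Fval
  have hpos : (0 : ℝ) < ((n : ℝ) + 2) ^ 2 := by positivity
  calc (((n : ℝ) + 2) ^ 2)⁻¹ * _ ≤ (((n : ℝ) + 2) ^ 2)⁻¹ * (((n : ℝ) + 2) ^ 2 * ((k' : ℝ) - k)) :=
        mul_le_mul_of_nonneg_left key (by positivity)
    _ = (k' : ℝ) - k := by field_simp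

lemma Fval_le (n : ℕ) {k k' : ℕ} (h : k ≠ k') :
    Fval n k k' ≤ ((|(k : ℤ) - (k' : ℤ)| : ℤ) : ℝ) := by
  rcases lt_or_gt_of_ne h with hlt | hgt
  · have := Fval_le_of_lt n hlt
    have hz : (|(k : ℤ) - (k' : ℤ)|) = (k' : ℤ) - k := by
      rw [abs_of_nonpos (by omega)]; ring
    have habs : ((|(k : ℤ) - (k' : ℤ)| : ℤ) : ℝ) = (k' : ℝ) - k := by
      rw [hz]; push_cast; ring
    rw [habs]; exact this
  · have := Fval_le_of_lt n hgt
    rw [Fval_comm] at this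
    have hz : (|(k : ℤ) - (k' : ℤ)|) = (k : ℤ) - k' := by
      rw [abs_of_nonneg (by omega)]
    have habs : ((|(k : ℤ) - (k' : ℤ)| : ℤ) : ℝ) = (k : ℝ) - k' := by
      rw [hz]; push_cast; ring
    rw [habs]; exact this


/-! ### Cylinders -/

def Cyl (N : ℕ) (c : EulerPath) : Set EulerPath := {x | ∀ i < N, x i = c i}

lemma measurableSet_Cyl (N : ℕ) (c : EulerPath) : MeasurableSet (Cyl N c) := by
  have h : Cyl N c = ⋂ i ∈ Finset.range N, {x : EulerPath | x i = c i} := by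
    ext x; simp [Cyl]
  rw [h]
  refine Finset.measurableSet_biInter _ fun i _ => ?_
  have h2 : {x : EulerPath | x i = c i} = (fun x : EulerPath => x i) ⁻¹' {c i} := rfl
  rw [h2]
  exact (measurable_pi_apply i) (measurableSet_singleton (c i))

lemma Cyl_eq_iUnion (N : ℕ) (c : EulerPath) :
    Cyl N c = ⋃ a : Fin (N + 2), Cyl (N + 1) (Function.update c N a) := by
  ext x
  simp only [Set.mem_iUnion, Cyl, Set.mem_setOf_eq]
  constructor
  · intro h
    refine ⟨x N, fun i hi => ?_⟩
    rcases Nat.lt_succ_iff_lt_or_eq.mp hi with hi' | rfl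
    · rw [Function.update_of_ne (Nat.ne_of_lt hi')]
      exact h i hi'
    · rw [Function.update_self]
  · rintro ⟨a, ha⟩ i hi
    have := ha i (Nat.lt_succ_of_lt hi)
    rwa [Function.update_of_ne (Nat.ne_of_lt hi)] at this

lemma Cyl_disjoint {N : ℕ} {c c' : EulerPath} {i : ℕ} (hi : i < N) (h : c i ≠ c' i) :
    Disjoint (Cyl N c) (Cyl N c') := by
  rw [Set.disjoint_left]
  intro x hx hx'
  exact h ((hx i hi).symm.trans (hx' i hi))

lemma kv_update (n : ℕ) (c : EulerPath) (a : Fin (n + 2)) :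
    kv (Function.update c n a) (n + 1) = stepf (kv c n) a := by
  rw [kv_succ, Function.update_self,
    show kv (Function.update c n a) n = kv c n from
      kv_congr n (fun i hi => Function.update_of_ne (Nat.ne_of_lt hi) _ _)]

lemma measurable_kv : ∀ N : ℕ, Measurable fun x : EulerPath => kv x N
  | 0 => measurable_const
  | N + 1 => by
    have ih := measurable_kv N
    have h : (fun x : EulerPath => kv x (N + 1)) =
        (fun q : ℕ × ℕ => stepf q.1 q.2) ∘ (fun x => (kv x N, (x N : ℕ))) := rfl
    rw [h]
    exact Measurable.of_discrete.comp
      (ih.prodMk ((Measurable.of_discrete (f := (Fin.val : Fin (N + 2) → ℕ))).comp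
        (measurable_pi_apply N)))

lemma measurable_D (N : ℕ) : Measurable (D N) := by
  have h : D N = (fun q : ℕ × ℕ => ((|(q.1 : ℤ) - (q.2 : ℤ)| : ℤ) : ℝ)) ∘
      (fun p : EulerPath × EulerPath => (kv p.1 N, kv p.2 N)) := rfl
  rw [h]
  exact Measurable.of_discrete.comp
    (((measurable_kv N).comp measurable_fst).prodMk ((measurable_kv N).comp measurable_snd))

/-! ### Truncation -/

def extEP (n : ℕ) (c : ∀ i : Fin n, Fin ((i : ℕ) + 2)) : EulerPath :=
  fun j => if h : j < n then c ⟨j, h⟩ else 0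

lemma extEP_spec (n : ℕ) (c : ∀ i : Fin n, Fin ((i : ℕ) + 2)) (i : ℕ) (h : i < n) :
    extEP n c i = c ⟨i, h⟩ := by
  simp [extEP, h]

/-- At every time at which the two paths are at distinct vertices, the vertex-distance
process satisfies the supermartingale inequality: `ρ`-a.e. on `{D_n > 0}` one has
`E_ρ[D_{n+1} | G_n] ≤ D_n`. -/

theorem euler_distance_supermartingale_inequality
    (η : Measure EulerPath) (hη : IsSymmetricMeasure η) (n : ℕ) :
    ∀ᵐ p ∂(η.prod η), 0 < D n p →
      MeasureTheory.condExp (pairAlg n) (η.prod η) (D (n + 1)) p ≤ D n p := by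
  classical
  obtain ⟨hprob, hcyl⟩ := hη
  haveI := hprob
  set ρ := η.prod η with hρdef
  haveI : IsProbabilityMeasure ρ := by rw [hρdef]; infer_instance
  have hm : pairAlg n ≤ (inferInstance : MeasurableSpace (EulerPath × EulerPath)) := pairFil.le n
  haveI : SigmaFinite (ρ.trim hm) := inferInstance
  -- the conditional-expectation candidate
  set g : EulerPath × EulerPath → ℝ := fun p => Fval n (kv p.1 n) (kv p.2 n) with hgdef
  -- measurability of coordinates w.r.t. pairAlg n
  have hcoord : ∀ i : Fin n,
      Measurable[pairAlg n] (fun p : EulerPath × EulerPath => (p.1 i, p.2 i)) := fun i =>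
    Measurable.of_comap_le (le_iSup
      (fun i : Fin n => MeasurableSpace.comap
        (fun p : EulerPath × EulerPath => (p.1 i, p.2 i)) inferInstance) i)
  have hτ1 : Measurable[pairAlg n]
      (fun p : EulerPath × EulerPath => (fun i : Fin n => p.1 i)) :=
    @measurable_pi_lambda _ _ _ (pairAlg n) _ _
      (fun i => measurable_fst.comp (hcoord i))
  have hτ2 : Measurable[pairAlg n]
      (fun p : EulerPath × EulerPath => (fun i : Fin n => p.2 i)) :=
    @measurable_pi_lambda _ _ _ (pairAlg n) _ _
      (fun i => measurable_snd.comp (hcoord i))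
  have hkv1 : Measurable[pairAlg n] (fun p : EulerPath × EulerPath => kv p.1 n) := by
    have h : (fun p : EulerPath × EulerPath => kv p.1 n)
        = (fun c : ∀ i : Fin n, Fin ((i : ℕ) + 2) => kv (extEP n c) n)
          ∘ (fun p : EulerPath × EulerPath => (fun i : Fin n => p.1 i)) := by
      funext p
      exact kv_congr n (fun i hi => (extEP_spec n (fun j : Fin n => p.1 j) i hi).symm)
    rw [h]
    exact Measurable.of_discrete.comp hτ1
  have hkv2 : Measurable[pairAlg n] (fun p : EulerPath × EulerPath => kv p.2 n) := by
    have h : (fun p : EulerPath × EulerPath => kv p.2 n)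
        = (fun c : ∀ i : Fin n, Fin ((i : ℕ) + 2) => kv (extEP n c) n)
          ∘ (fun p : EulerPath × EulerPath => (fun i : Fin n => p.2 i)) := by
      funext p
      exact kv_congr n (fun i hi => (extEP_spec n (fun j : Fin n => p.2 j) i hi).symm)
    rw [h]
    exact Measurable.of_discrete.comp hτ2
  have hg_meas : Measurable[pairAlg n] g := by
    have h : g = (fun q : ℕ × ℕ => Fval n q.1 q.2)
        ∘ (fun p : EulerPath × EulerPath => (kv p.1 n, kv p.2 n)) := rfl
    rw [h]
    exact Measurable.of_discrete.comp (hkv1.prodMk hkv2)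
  have hg_sm : StronglyMeasurable[pairAlg n] g := hg_meas.stronglyMeasurable
  -- integrability
  have hD_int : Integrable (D (n + 1)) ρ := by
    refine Integrable.mono' (integrable_const (2 * (n : ℝ) + 4))
      (measurable_D (n + 1)).aestronglyMeasurable (Filter.Eventually.of_forall fun p => ?_)
    have h1 : |(kv p.1 (n + 1) : ℤ) - (kv p.2 (n + 1) : ℤ)| ≤ 2 * (n : ℤ) + 4 := by
      have := kv_le p.1 (n + 1); have := kv_le p.2 (n + 1)
      rw [abs_le]; omega
    have h0 : (0 : ℝ) ≤ D (n + 1) p := by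
      show (0 : ℝ) ≤ ((|(kv p.1 (n + 1) : ℤ) - (kv p.2 (n + 1) : ℤ)| : ℤ) : ℝ)
      exact Int.cast_nonneg_iff.mpr (abs_nonneg _)
    rw [Real.norm_eq_abs, abs_of_nonneg h0]
    show ((|(kv p.1 (n + 1) : ℤ) - (kv p.2 (n + 1) : ℤ)| : ℤ) : ℝ) ≤ 2 * (n : ℝ) + 4
    exact_mod_cast h1
  have hg_int : Integrable g ρ := by
    refine Integrable.mono' (integrable_const (2 * (n : ℝ) + 2))
      (hg_meas.mono hm le_rfl).aestronglyMeasurable (Filter.Eventually.of_forall fun p => ?_)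
    rw [Real.norm_eq_abs, abs_of_nonneg (Fval_nonneg n _ _)]
    refine le_trans (Fval_le_bound n _ _) ?_
    have := kv_le p.1 n; have := kv_le p.2 n
    have h1 : (kv p.1 n : ℝ) ≤ n := by exact_mod_cast kv_le p.1 n
    have h2 : (kv p.2 n : ℝ) ≤ n := by exact_mod_cast kv_le p.2 n
    linarith
  -- cylinder measures
  set P : ℕ → ℝ≥0∞ := fun N => ∏ i ∈ Finset.range N, ((i : ℝ≥0∞) + 2)⁻¹ with hPdef
  have hP : ∀ (N : ℕ) (c : EulerPath), η (Cyl N c) = P N := fun N c => hcyl N c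
  have hρcyl : ∀ (N : ℕ) (c d : EulerPath), ρ (Cyl N c ×ˢ Cyl N d) = P N * P N := by
    intro N c d
    rw [hρdef, Measure.prod_prod, hP, hP]
  -- key per-cylinder identity
  have key : ∀ c d : EulerPath,
      ∫ p in Cyl n c ×ˢ Cyl n d, D (n + 1) p ∂ρ = ∫ p in Cyl n c ×ˢ Cyl n d, g p ∂ρ := by
    intro c d
    -- right-hand side: `g` is constant on the cylinder
    have hset : MeasurableSet (Cyl n c ×ˢ Cyl n d) :=
      (measurableSet_Cyl n c).prod (measurableSet_Cyl n d)
    have hgc : Set.EqOn g (fun _ => Fval n (kv c n) (kv d n)) (Cyl n c ×ˢ Cyl n d) := by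
      rintro ⟨x, y⟩ ⟨hx, hy⟩
      show Fval n (kv x n) (kv y n) = _
      rw [kv_congr n hx, kv_congr n hy]
    rw [setIntegral_congr_fun hset hgc, setIntegral_const, measureReal_def, hρcyl]
    -- left-hand side: decompose the cylinder into length-(n+1) subcylinders
    have hdecomp : Cyl n c ×ˢ Cyl n d
        = ⋃ ab ∈ (Finset.univ : Finset (Fin (n + 2) × Fin (n + 2))),
            (Cyl (n + 1) (Function.update c n ab.1) ×ˢ Cyl (n + 1) (Function.update d n ab.2)) := by
      ext p
      simp only [Set.mem_iUnion, Finset.mem_univ, Set.mem_prod, exists_prop, true_and,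
        Prod.exists, Set.mem_iUnion]
      constructor
      · rintro ⟨h1, h2⟩
        rw [Cyl_eq_iUnion n c] at h1
        rw [Cyl_eq_iUnion n d] at h2
        obtain ⟨a, ha⟩ := Set.mem_iUnion.mp h1
        obtain ⟨b, hb⟩ := Set.mem_iUnion.mp h2
        exact ⟨a, b, ha, hb⟩
      · rintro ⟨a, b, ha, hb⟩
        constructor
        · rw [Cyl_eq_iUnion n c]; exact Set.mem_iUnion.mpr ⟨a, ha⟩
        · rw [Cyl_eq_iUnion n d]; exact Set.mem_iUnion.mpr ⟨b, hb⟩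
    have hdisj : (↑(Finset.univ : Finset (Fin (n + 2) × Fin (n + 2))) :
        Set (Fin (n + 2) × Fin (n + 2))).Pairwise (Function.onFun Disjoint
          (fun ab : Fin (n + 2) × Fin (n + 2) =>
            Cyl (n + 1) (Function.update c n ab.1) ×ˢ Cyl (n + 1) (Function.update d n ab.2))) := by
      intro ab _ ab' _ hne
      refine Set.disjoint_left.mpr ?_
      rintro ⟨x, y⟩ ⟨hx, hy⟩ ⟨hx', hy'⟩
      have e1 : ab.1 = ab'.1 := by
        have h1 := hx n (Nat.lt_succ_self n)
        have h2 := hx' n (Nat.lt_succ_self n)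
        rw [Function.update_self] at h1 h2
        exact h1.symm.trans h2
      have e2 : ab.2 = ab'.2 := by
        have h1 := hy n (Nat.lt_succ_self n)
        have h2 := hy' n (Nat.lt_succ_self n)
        rw [Function.update_self] at h1 h2
        exact h1.symm.trans h2
      exact hne (Prod.ext e1 e2)
    rw [hdecomp, integral_biUnion_finset _
      (fun ab _ => (measurableSet_Cyl _ _).prod (measurableSet_Cyl _ _)) hdisj
      (fun ab _ => hD_int.integrableOn)]
    -- each piece: `D (n+1)` is constant there
    have hpiece : ∀ ab : Fin (n + 2) × Fin (n + 2),
        ∫ p in Cyl (n + 1) (Function.update c n ab.1) ×ˢ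
            Cyl (n + 1) (Function.update d n ab.2), D (n + 1) p ∂ρ
          = (P (n + 1) * P (n + 1)).toReal •
            ((|(stepf (kv c n) ab.1 : ℤ) - (stepf (kv d n) ab.2 : ℤ)| : ℤ) : ℝ) := by
      intro ab
      have hDc : Set.EqOn (D (n + 1))
          (fun _ => ((|(stepf (kv c n) ab.1 : ℤ) - (stepf (kv d n) ab.2 : ℤ)| : ℤ) : ℝ))
          (Cyl (n + 1) (Function.update c n ab.1) ×ˢ Cyl (n + 1) (Function.update d n ab.2)) := by
        rintro ⟨x, y⟩ ⟨hx, hy⟩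
        show ((|(kv x (n + 1) : ℤ) - (kv y (n + 1) : ℤ)| : ℤ) : ℝ) = _
        rw [kv_congr (n + 1) hx, kv_congr (n + 1) hy, kv_update, kv_update]
      rw [setIntegral_congr_fun ((measurableSet_Cyl _ _).prod (measurableSet_Cyl _ _)) hDc,
        setIntegral_const, measureReal_def, hρcyl]
    rw [Finset.sum_congr rfl (fun ab _ => hpiece ab)]
    -- the arithmetic identity
    have hsucc : (P (n + 1)).toReal = ((n : ℝ) + 2)⁻¹ * (P n).toReal := by
      have h1 : P (n + 1) = P n * ((n : ℝ≥0∞) + 2)⁻¹ := Finset.prod_range_succ _ _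
      have h2 : ((n : ℝ≥0∞) + 2) = ((n + 2 : ℕ) : ℝ≥0∞) := by push_cast; ring
      rw [h1, ENNReal.toReal_mul, h2, ENNReal.toReal_inv, ENNReal.toReal_natCast]
      push_cast; ring
    simp only [smul_eq_mul, ENNReal.toReal_mul, hsucc]
    rw [← Finset.mul_sum, Fintype.sum_prod_type]
    unfold Fval
    have hsq : ((((n : ℝ) + 2)) ^ 2)⁻¹ = ((n : ℝ) + 2)⁻¹ * ((n : ℝ) + 2)⁻¹ := by
      rw [sq, mul_inv]
    rw [hsq]
    ring
  -- set-integral equality for all pairAlg-n-measurable sets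
  set Bsp := ((∀ i : Fin n, Fin ((i : ℕ) + 2)) × (∀ i : Fin n, Fin ((i : ℕ) + 2))) with hBdef
  set π : EulerPath × EulerPath → Bsp :=
    fun p => (fun i => p.1 i, fun i => p.2 i) with hπdef
  have hπ_meas : Measurable π := by
    refine Measurable.prodMk ?_ ?_
    · exact measurable_pi_lambda _ (fun i => (measurable_pi_apply _).comp measurable_fst)
    · exact measurable_pi_lambda _ (fun i => (measurable_pi_apply _).comp measurable_snd)
  have h_le : pairAlg n ≤ MeasurableSpace.comap π ⊤ := by
    refine iSup_le fun i => ?_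
    have hfac : (fun p : EulerPath × EulerPath => (p.1 i, p.2 i))
        = (fun q : Bsp => (q.1 i, q.2 i)) ∘ π := rfl
    rw [hfac, ← MeasurableSpace.comap_comp]
    exact MeasurableSpace.comap_mono le_top
  have hatom : ∀ b : Bsp, π ⁻¹' {b} = Cyl n (extEP n b.1) ×ˢ Cyl n (extEP n b.2) := by
    intro b
    ext p
    constructor
    · intro hp
      have hp' : π p = b := hp
      have h1 : ∀ i : Fin n, p.1 i = b.1 i := fun i => congrFun (congrArg Prod.fst hp') i
      have h2 : ∀ i : Fin n, p.2 i = b.2 i := fun i => congrFun (congrArg Prod.snd hp') i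
      refine ⟨fun i hi => ?_, fun i hi => ?_⟩
      · rw [extEP_spec n b.1 i hi]; exact h1 ⟨i, hi⟩
      · rw [extEP_spec n b.2 i hi]; exact h2 ⟨i, hi⟩
    · rintro ⟨h1, h2⟩
      show π p = b
      refine Prod.ext ?_ ?_
      · funext i
        show p.1 i = b.1 i
        rw [h1 i i.2, extEP_spec n b.1 i i.2]
      · funext i
        show p.2 i = b.2 i
        rw [h2 i i.2, extEP_spec n b.2 i i.2]
  have hsetint : ∀ s, MeasurableSet[pairAlg n] s → ρ s < ⊤ →
      ∫ p in s, g p ∂ρ = ∫ p in s, D (n + 1) p ∂ρ := by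
    intro s hs _
    obtain ⟨t, -, rfl⟩ := h_le s hs
    have htu : π ⁻¹' t = ⋃ b ∈ (Set.toFinite t).toFinset, π ⁻¹' {b} := by
      ext p
      simp only [Set.mem_preimage, Set.mem_iUnion, Set.Finite.mem_toFinset,
        Set.mem_singleton_iff]
      constructor
      · intro h; exact ⟨π p, h, rfl⟩
      · rintro ⟨b, hb, hb2⟩
        subst hb2; exact hb
    rw [htu,
      integral_biUnion_finset _ (fun b _ => hπ_meas (measurableSet_singleton b))
        (fun b _ b' _ hne => Set.disjoint_left.mpr fun p hp hp' =>
          hne (by rw [← hp, ← hp']))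
        (fun b _ => hg_int.integrableOn),
      integral_biUnion_finset _ (fun b _ => hπ_meas (measurableSet_singleton b))
        (fun b _ b' _ hne => Set.disjoint_left.mpr fun p hp hp' =>
          hne (by rw [← hp, ← hp']))
        (fun b _ => hD_int.integrableOn)]
    refine Finset.sum_congr rfl fun b _ => ?_
    rw [hatom b]
    exact (key (extEP n b.1) (extEP n b.2)).symm
  have hcond : g =ᵐ[ρ] MeasureTheory.condExp (pairAlg n) ρ (D (n + 1)) :=
    ae_eq_condExp_of_forall_setIntegral_eq hm hD_int
      (fun s _ _ => hg_int.integrableOn) hsetint hg_sm.aestronglyMeasurable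
  filter_upwards [hcond] with p hp hpos
  rw [← hp]
  have hk : kv p.1 n ≠ kv p.2 n := by
    intro h
    rw [show D n p = 0 by simp [D, h]] at hpos
    exact lt_irrefl _ hpos
  exact Fval_le n hk
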